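/- Abelian lower bound for the Laplace exponent: under (H0), assume in addition that lim_{x→0+} φ((x,∞))/x^{−α} = C for some α ∈ (1,2) and C > 0. Then there exist constants b > 0 and R > 0 such that |ψ(ξ)| ≥ b |ξ|^α for every complex ξ with Re ξ > 0 and |ξ| ≥ R. -/

import Mathlib

open MeasureTheory Set Filter Topology

noncomputable section

/-- The tail `φ((y, ∞))` of the Lévy measure `φ`. -/
def levyTail (φ : Measure ℝ) (y : ℝ) : ℝ := (φ (Ioi y)).toReal

/-- The function `Φ(x) = ∫_x^∞ φ((y,∞)) dy` for `x > 0`, and `0` for `x ≤ 0`. -/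
def PhiFn (φ : Measure ℝ) (x : ℝ) : ℝ :=
  if 0 < x then ∫ y in Ioi x, levyTail φ y else 0

/-- The Laplace exponent `ψ(ξ) = ξ² ∫_0^∞ e^{-ξ x} Φ(x) dx`. -/
def psiFn (φ : Measure ℝ) (ξ : ℂ) : ℂ :=
  ξ ^ 2 * ∫ x in Ioi (0 : ℝ), Complex.exp (-ξ * (x : ℂ)) * (PhiFn φ x : ℂ)

/-- Assumption (H0): `φ` is a nonnegative Borel measure on `(0,∞)` with
`∫ (z² ∧ z) φ(dz) < ∞` and `∫_{(0,1)} z φ(dz) = ∞`. -/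
def H0 (φ : Measure ℝ) : Prop :=
  φ (Iic 0) = 0 ∧
  (∫⁻ z in Ioi (0 : ℝ), ENNReal.ofReal (min (z ^ 2) z) ∂φ) < ⊤ ∧
  (∫⁻ z in Ioo (0 : ℝ) 1, ENNReal.ofReal z ∂φ) = ⊤

namespace AbelianAux

lemma tail_nonneg (φ : Measure ℝ) (y : ℝ) : 0 ≤ levyTail φ y := ENNReal.toReal_nonneg

lemma tail_measurable (φ : Measure ℝ) : Measurable (levyTail φ) :=
  (Antitone.measurable fun _ _ h => measure_mono (Ioi_subset_Ioi h)).ennreal_toReal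

lemma tail_exists_delta (φ : Measure ℝ) (α C : ℝ) (hC : 0 < C)
    (htail : Tendsto (fun x : ℝ => levyTail φ x / x ^ (-α))
      (nhdsWithin 0 (Ioi 0)) (nhds C)) :
    ∃ δ : ℝ, 0 < δ ∧ δ ≤ 1 ∧ ∀ x : ℝ, 0 < x → x ≤ δ →
      C/2 * x ^ (-α) ≤ levyTail φ x ∧ levyTail φ x ≤ 2*C * x ^ (-α) ∧ φ (Ioi x) ≠ ⊤ := by
  have hev : ∀ᶠ x in nhdsWithin (0:ℝ) (Ioi 0),
      levyTail φ x / x ^ (-α) ∈ Ioo (C/2) (2*C) :=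
    htail (Ioo_mem_nhds (by linarith) (by linarith))
  rw [eventually_iff, mem_nhdsGT_iff_exists_Ioc_subset] at hev
  obtain ⟨u, hu, hsub⟩ := hev
  refine ⟨min u 1, lt_min hu zero_lt_one, min_le_right _ _, fun x hx hxδ => ?_⟩
  have hxu : x ∈ Ioc (0:ℝ) u := ⟨hx, hxδ.trans (min_le_left _ _)⟩
  have hmem := hsub hxu
  have hrp : (0:ℝ) < x ^ (-α) := Real.rpow_pos_of_pos hx _
  have h1 : C/2 * x ^ (-α) ≤ levyTail φ x := by
    have := hmem.1.le
    calc C/2 * x ^ (-α) ≤ levyTail φ x / x ^ (-α) * x ^ (-α) := by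
          apply mul_le_mul_of_nonneg_right this hrp.le
      _ = levyTail φ x := div_mul_cancel₀ _ hrp.ne'
  refine ⟨h1, ?_, ?_⟩
  · have := hmem.2.le
    calc levyTail φ x = levyTail φ x / x ^ (-α) * x ^ (-α) := (div_mul_cancel₀ _ hrp.ne').symm
      _ ≤ 2*C * x ^ (-α) := mul_le_mul_of_nonneg_right this hrp.le
  · intro htop
    have : levyTail φ x = 0 := by simp [levyTail, htop]
    have hpos : 0 < levyTail φ x := lt_of_lt_of_le (by positivity) h1
    simp [this] at hpos

lemma tail_ne_top (φ : Measure ℝ) {δ : ℝ} (hδ : 0 < δ)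
    (hfin : φ (Ioi δ) ≠ ⊤)
    (hδfin : ∀ x : ℝ, 0 < x → x ≤ δ → φ (Ioi x) ≠ ⊤) :
    ∀ x : ℝ, 0 < x → φ (Ioi x) ≠ ⊤ := by
  intro x hx
  rcases le_or_gt x δ with h | h
  · exact hδfin x hx h
  · exact fun htop => hfin (top_le_iff.mp (htop ▸ measure_mono (Ioi_subset_Ioi h.le)))

lemma tail_anti (φ : Measure ℝ) (hfin : ∀ x : ℝ, 0 < x → φ (Ioi x) ≠ ⊤)
    {a b : ℝ} (ha : 0 < a) (hab : a ≤ b) : levyTail φ b ≤ levyTail φ a :=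
  ENNReal.toReal_mono (hfin a ha) (measure_mono (Ioi_subset_Ioi hab))

lemma sigmaFinite_aux (φ : Measure ℝ) (h0 : φ (Iic 0) = 0)
    (hfin : ∀ x : ℝ, 0 < x → φ (Ioi x) ≠ ⊤) : SigmaFinite φ := by
  refine ⟨⟨⟨fun n => Iic 0 ∪ Ioi (1/(n+1) : ℝ), fun _ => trivial, fun n => ?_, ?_⟩⟩⟩
  · refine lt_of_le_of_lt (measure_union_le _ _) ?_
    rw [h0, zero_add]
    exact (hfin _ (by positivity)).lt_top
  · ext x
    simp only [mem_iUnion, mem_union, mem_Iic, mem_Ioi, mem_univ, iff_true]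
    rcases le_or_gt x 0 with h | h
    · exact ⟨0, Or.inl h⟩
    · obtain ⟨n, hn⟩ := exists_nat_one_div_lt h
      exact ⟨n, Or.inr hn⟩

lemma integrableOn_tail_Ioi_one (φ : Measure ℝ) (h0 : φ (Iic 0) = 0)
    (hmom : (∫⁻ z in Ioi (0 : ℝ), ENNReal.ofReal (min (z ^ 2) z) ∂φ) < ⊤)
    (hsf : SigmaFinite φ) :
    IntegrableOn (levyTail φ) (Ioi (1:ℝ)) := by
  constructor
  · exact (tail_measurable φ).aestronglyMeasurable
  · show HasFiniteIntegral (fun y => (φ (Ioi y)).toReal) (volume.restrict (Ioi 1))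
    rw [hasFiniteIntegral_iff_ofReal (Eventually.of_forall fun y => ENNReal.toReal_nonneg)]
    have step1 : (∫⁻ y in Ioi (1:ℝ), ENNReal.ofReal ((φ (Ioi y)).toReal)) ≤
        ∫⁻ y in Ioi (1:ℝ), φ (Ioi y) := by
      apply lintegral_mono
      intro y
      exact ENNReal.ofReal_toReal_le
    have step2 : (∫⁻ y in Ioi (1:ℝ), φ (Ioi y)) =
        ∫⁻ z, ENNReal.ofReal (z - 1) ∂φ := by
      have hswap := lintegral_lintegral_swap (μ := volume.restrict (Ioi (1:ℝ))) (ν := φ)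
        (f := fun y z => ({p : ℝ × ℝ | p.1 < p.2}.indicator 1 (y, z)))
        ((measurable_one.indicator (measurableSet_lt measurable_fst measurable_snd)).aemeasurable)
      calc (∫⁻ y in Ioi (1:ℝ), φ (Ioi y))
          = ∫⁻ y in Ioi (1:ℝ), ∫⁻ z, ({p : ℝ × ℝ | p.1 < p.2}.indicator 1 (y, z)) ∂φ := by
            refine lintegral_congr fun y => ?_
            rw [show (fun z => ({p : ℝ × ℝ | p.1 < p.2}.indicator 1 (y, z))) =
                  fun z => (Ioi y).indicator 1 z by
              funext z; simp [Set.indicator_apply, mem_Ioi]]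
            rw [lintegral_indicator_one measurableSet_Ioi]
        _ = ∫⁻ z, (∫⁻ y in Ioi (1:ℝ), ({p : ℝ × ℝ | p.1 < p.2}.indicator 1 (y, z))) ∂φ := by exact hswap
        _ = ∫⁻ z, ENNReal.ofReal (z - 1) ∂φ := by
            refine lintegral_congr fun z => ?_
            rw [show (fun y => ({p : ℝ × ℝ | p.1 < p.2}.indicator 1 (y, z))) =
                  fun y => (Iio z).indicator 1 y by
              funext y; simp [Set.indicator_apply, mem_Iio]]
            rw [lintegral_indicator_one measurableSet_Iio,
              Measure.restrict_apply measurableSet_Iio, Iio_inter_Ioi, Real.volume_Ioo]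
    have step3 : (∫⁻ z, ENNReal.ofReal (z - 1) ∂φ) ≤
        ∫⁻ z in Ioi (0 : ℝ), ENNReal.ofReal (min (z ^ 2) z) ∂φ := by
      rw [← lintegral_add_compl (fun z => ENNReal.ofReal (z - 1)) measurableSet_Ioi (μ := φ)]
      have hc : (∫⁻ z in (Ioi (0:ℝ))ᶜ, ENNReal.ofReal (z - 1) ∂φ) = 0 := by
        rw [compl_Ioi, Measure.restrict_eq_zero.mpr h0, lintegral_zero_measure]
      rw [hc, add_zero]
      apply setLIntegral_mono (by measurability)
      intro z hz
      apply ENNReal.ofReal_le_ofReal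
      rcases le_or_gt z 1 with h | h
      · have : (0:ℝ) ≤ min (z^2) z := le_min (by positivity) (le_of_lt hz)
        linarith
      · rw [min_eq_right (by nlinarith : z ≤ z^2)]
        linarith
    exact lt_of_le_of_lt (step1.trans (step2.le.trans step3)) hmom

lemma integrable_master (φ : Measure ℝ) {α C δ : ℝ}
    (hα1 : 1 < α) (hα2 : α < 2)
    (hδ : 0 < δ) (hδ1 : δ ≤ 1)
    (hup : ∀ x : ℝ, 0 < x → x ≤ δ → levyTail φ x ≤ 2*C * x ^ (-α))
    (hfin : ∀ x : ℝ, 0 < x → φ (Ioi x) ≠ ⊤)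
    (hIoi1 : IntegrableOn (levyTail φ) (Ioi (1:ℝ))) :
    IntegrableOn (fun y => levyTail φ y * min y 1) (Ioi (0:ℝ)) := by
  have hmeas : Measurable (fun y => levyTail φ y * min y 1) :=
    (tail_measurable φ).mul (measurable_id.min measurable_const)
  have hsplit : Ioi (0:ℝ) = Ioc 0 1 ∪ Ioi 1 := (Ioc_union_Ioi_eq_Ioi zero_le_one).symm
  rw [hsplit]
  apply IntegrableOn.union
  · -- on Ioc 0 1
    have hsplit2 : Ioc (0:ℝ) 1 = Ioc 0 δ ∪ Ioc δ 1 := (Ioc_union_Ioc_eq_Ioc hδ.le hδ1).symm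
    rw [hsplit2]
    apply IntegrableOn.union
    · -- on Ioc 0 δ : majorant 2C y^(1-α)
      have hmaj : IntegrableOn (fun y : ℝ => 2*C * y ^ (1-α)) (Ioc 0 δ) := by
        apply Integrable.const_mul
        have := (intervalIntegral.integrableOn_Ioo_rpow_iff (s := 1-α) hδ).mpr (by linarith)
        exact this.congr_set_ae Ioo_ae_eq_Ioc.symm
      apply Integrable.mono' hmaj hmeas.aestronglyMeasurable
      rw [ae_restrict_iff' measurableSet_Ioc]
      refine Eventually.of_forall fun y hy => ?_
      have hy0 : (0:ℝ) < y := hy.1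
      have hT := hup y hy0 hy.2
      have hTn := tail_nonneg φ y
      rw [Real.norm_of_nonneg (mul_nonneg hTn (le_min hy0.le zero_le_one))]
      calc levyTail φ y * min y 1 ≤ (2*C * y ^ (-α)) * y :=
              mul_le_mul hT (min_le_left _ _) (le_min hy0.le zero_le_one) (hTn.trans hT)
          _ = 2*C * y ^ (1-α) := by
              rw [mul_assoc]
              congr 1
              rw [show (1-α : ℝ) = -α + 1 by ring, Real.rpow_add hy0, Real.rpow_one]
    · -- on Ioc δ 1 : bounded by levyTail φ δ
      apply Integrable.mono' (g := fun _ : ℝ => levyTail φ δ)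
        (integrableOn_const measure_Ioc_lt_top.ne)
        hmeas.aestronglyMeasurable
      rw [ae_restrict_iff' measurableSet_Ioc]
      refine Eventually.of_forall fun y hy => ?_
      have hy0 : (0:ℝ) < y := hδ.trans hy.1
      have hTn := tail_nonneg φ y
      rw [Real.norm_of_nonneg (mul_nonneg hTn (le_min hy0.le zero_le_one))]
      calc levyTail φ y * min y 1 ≤ levyTail φ y * 1 := by
            apply mul_le_mul_of_nonneg_left (min_le_right _ _) hTn
        _ = levyTail φ y := mul_one _
        _ ≤ levyTail φ δ := tail_anti φ hfin hδ hy.1.le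
  · -- on Ioi 1
    apply Integrable.mono' hIoi1 hmeas.aestronglyMeasurable
    rw [ae_restrict_iff' measurableSet_Ioi]
    refine Eventually.of_forall fun y hy => ?_
    have hy0 : (0:ℝ) < y := lt_trans zero_lt_one hy
    have hTn := tail_nonneg φ y
    rw [Real.norm_of_nonneg (mul_nonneg hTn (le_min hy0.le zero_le_one))]
    calc levyTail φ y * min y 1 ≤ levyTail φ y * 1 :=
          mul_le_mul_of_nonneg_left (min_le_right _ _) hTn
      _ = levyTail φ y := mul_one _

lemma integrableOn_tail_Ioi (φ : Measure ℝ) {x : ℝ} (hx : 0 < x)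
    (hmaster : IntegrableOn (fun y => levyTail φ y * min y 1) (Ioi (0:ℝ))) :
    IntegrableOn (levyTail φ) (Ioi x) := by
  have h1 : IntegrableOn (fun y => (min x 1)⁻¹ * (levyTail φ y * min y 1)) (Ioi x) :=
    ((hmaster.mono_set (Ioi_subset_Ioi hx.le)).const_mul _)
  apply Integrable.mono' h1 (tail_measurable φ).aestronglyMeasurable
  rw [ae_restrict_iff' measurableSet_Ioi]
  refine Eventually.of_forall fun y hy => ?_
  have hxy : x ≤ y := (le_of_lt hy)
  have hy0 : (0:ℝ) < y := hx.trans_le hxy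
  have hminpos : (0:ℝ) < min x 1 := lt_min hx zero_lt_one
  rw [Real.norm_of_nonneg (tail_nonneg φ y)]
  rw [mul_comm ((min x 1)⁻¹) _, ← div_eq_mul_inv, le_div_iff₀ hminpos]
  apply mul_le_mul_of_nonneg_left _ (tail_nonneg φ y)
  exact min_le_min hxy le_rfl

lemma integral_exp_aux {ξ : ℂ} (hξ : ξ ≠ 0) (y : ℝ) :
    ∫ x in (0:ℝ)..y, Complex.exp (-ξ * x) = (1 - Complex.exp (-ξ * y)) / ξ := by
  rw [integral_exp_mul_complex (neg_ne_zero.mpr hξ)]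
  rw [Complex.ofReal_zero, mul_zero, Complex.exp_zero]
  rw [div_eq_div_iff (neg_ne_zero.mpr hξ) hξ]
  ring

lemma norm_exp_le_one {ξ : ℂ} (hξ : 0 ≤ ξ.re) {x : ℝ} (hx : 0 ≤ x) :
    ‖Complex.exp (-ξ * x)‖ ≤ 1 := by
  rw [Complex.norm_exp]
  apply Real.exp_le_one_iff.mpr
  simp only [neg_mul, Complex.neg_re, Complex.mul_re, Complex.ofReal_re, Complex.ofReal_im,
    mul_zero, sub_zero]
  nlinarith

lemma norm_one_sub_exp_le {ξ : ℂ} (hξ : 0 < ξ.re) {y : ℝ} (hy : 0 ≤ y) :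
    ‖1 - Complex.exp (-ξ * y)‖ ≤ min (‖ξ‖ * y) 2 := by
  have hξ0 : ξ ≠ 0 := fun h => by simp [h] at hξ
  apply le_min
  · have h1 : 1 - Complex.exp (-ξ * y) = ξ * ∫ x in (0:ℝ)..y, Complex.exp (-ξ * x) := by
      rw [integral_exp_aux hξ0, mul_div_cancel₀ _ hξ0]
    rw [h1]
    rw [norm_mul]
    apply mul_le_mul_of_nonneg_left _ (norm_nonneg ξ)
    calc ‖∫ x in (0:ℝ)..y, Complex.exp (-ξ * x)‖ ≤ 1 * |y - 0| := by
          apply intervalIntegral.norm_integral_le_of_norm_le_const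
          intro x hx
          rw [uIoc_of_le hy] at hx
          exact norm_exp_le_one hξ.le hx.1.le
      _ = y := by rw [one_mul, sub_zero, abs_of_nonneg hy]
  · calc ‖1 - Complex.exp (-ξ * y)‖ ≤ ‖(1:ℂ)‖ + ‖Complex.exp (-ξ * y)‖ := norm_sub_le _ _
      _ ≤ 1 + 1 := by
          rw [norm_one]
          exact add_le_add_right (norm_exp_le_one hξ.le hy) 1
      _ = 2 := by norm_num

lemma integrable_M (φ : Measure ℝ) {ξ : ℂ} (hξ : 0 < ξ.re)
    (hmaster : IntegrableOn (fun y => levyTail φ y * min y 1) (Ioi (0:ℝ))) :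
    IntegrableOn (fun y : ℝ => (levyTail φ y : ℂ) * (1 - Complex.exp (-ξ * y))) (Ioi (0:ℝ)) := by
  have hTn : ∀ y, 0 ≤ levyTail φ y := fun y => ENNReal.toReal_nonneg
  have hTm : Measurable (levyTail φ) :=
    (Antitone.measurable fun _ _ h => measure_mono (Ioi_subset_Ioi h)).ennreal_toReal
  have hmeas : AEStronglyMeasurable
      (fun y : ℝ => (levyTail φ y : ℂ) * (1 - Complex.exp (-ξ * y)))
      (volume.restrict (Ioi 0)) := by
    apply AEStronglyMeasurable.mul
    · exact (Complex.measurable_ofReal.comp hTm).aestronglyMeasurable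
    · apply Continuous.aestronglyMeasurable
      continuity
  apply Integrable.mono' (hmaster.const_mul (max (‖ξ‖) 2)) hmeas
  · rw [ae_restrict_iff' measurableSet_Ioi]
    refine Eventually.of_forall fun y hy => ?_
    have hy0 : (0:ℝ) < y := hy
    rw [norm_mul, Complex.norm_real, Real.norm_of_nonneg (hTn y)]
    calc levyTail φ y * ‖1 - Complex.exp (-ξ * y)‖
        ≤ levyTail φ y * (max (‖ξ‖) 2 * min y 1) := by
          apply mul_le_mul_of_nonneg_left _ (hTn y)
          refine (norm_one_sub_exp_le hξ hy0.le).trans ?_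
          rcases le_or_gt y 1 with h | h
          · rw [min_eq_left h]
            calc min (‖ξ‖ * y) 2 ≤ ‖ξ‖ * y := min_le_left _ _
              _ ≤ max (‖ξ‖) 2 * y :=
                  mul_le_mul_of_nonneg_right (le_max_left _ _) hy0.le
          · rw [min_eq_right h.le]
            calc min (‖ξ‖ * y) 2 ≤ 2 := min_le_right _ _
              _ = 2 * 1 := (mul_one 2).symm
              _ ≤ max (‖ξ‖) 2 * 1 :=
                  mul_le_mul_of_nonneg_right (le_max_right _ _) zero_le_one
      _ = max (‖ξ‖) 2 * (levyTail φ y * min y 1) := by ring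
  -- note: need ‖f‖ ≤ g with g the const_mul'd integrable function

lemma integral_exp_real {t : ℝ} (ht : 0 < t) :
    ∫ x in Ioi (0:ℝ), Real.exp (-t * x) = 1/t := by
  have hderiv : ∀ x ∈ Ioi (0:ℝ),
      HasDerivAt (fun x : ℝ => -Real.exp (-t * x)/t) (Real.exp (-t * x)) x := by
    intro x _
    have h1 : HasDerivAt (fun x : ℝ => -t * x) (-t) x := by
      simpa using (hasDerivAt_id x).const_mul (-t)
    have h2 := (Real.hasDerivAt_exp (-t * x)).comp x h1
    have h3 : HasDerivAt (fun x : ℝ => -((Real.exp ∘ fun x => -t * x) x / t))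
        (-(Real.exp (-t * x) * -t / t)) x := (h2.div_const t).neg
    convert h3 using 1
    · funext z; simp [Function.comp, neg_div]
    · rw [mul_neg, neg_div, neg_neg, mul_div_assoc, div_self ht.ne', mul_one]
  have hcont : ContinuousWithinAt (fun x : ℝ => -Real.exp (-t * x)/t) (Ici 0) 0 :=
    (Continuous.continuousWithinAt (by continuity))
  have htend : Tendsto (fun x : ℝ => -Real.exp (-t * x)/t) atTop (𝓝 0) := by
    have h1 : Tendsto (fun x : ℝ => t * x) atTop atTop :=
      Tendsto.const_mul_atTop ht tendsto_id
    have h2 := (Real.tendsto_exp_neg_atTop_nhds_zero.comp h1)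
    have h3 := (h2.neg.div_const t)
    simpa [neg_mul] using h3
  have := integral_Ioi_of_hasDerivAt_of_tendsto hcont hderiv
    (exp_neg_integrableOn_Ioi 0 ht) htend
  rw [this]
  simp [Real.exp_zero]
  ring

lemma psi_eq (φ : Measure ℝ) {ξ : ℂ} (hξ : 0 < ξ.re)
    (hfin : ∀ x : ℝ, 0 < x → φ (Ioi x) ≠ ⊤)
    (hmaster : IntegrableOn (fun y => levyTail φ y * min y 1) (Ioi (0:ℝ))) :
    (∫ x in Ioi (0:ℝ), Complex.exp (-ξ * x) * (PhiFn φ x : ℂ)) =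
      (∫ y in Ioi (0:ℝ), (levyTail φ y : ℂ) * (1 - Complex.exp (-ξ * y))) / ξ := by
  have hξ0 : ξ ≠ 0 := fun h => by simp [h] at hξ
  set T := levyTail φ with hT
  set μ : Measure ℝ := volume.restrict (Ioi (0:ℝ)) with hμ
  set K : ℝ → ℝ → ℂ := fun x y => if x < y then Complex.exp (-ξ * x) * (T y : ℂ) else 0
    with hK
  have hTn : ∀ y, 0 ≤ T y := tail_nonneg φ
  have hTm : Measurable T := tail_measurable φ
  have hKnorm : ∀ x y : ℝ, ‖K x y‖ =
      if x < y then Real.exp (-ξ.re * x) * T y else 0 := by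
    intro x y
    by_cases h : x < y
    · simp only [hK, if_pos h, norm_mul, Complex.norm_exp,
        Complex.norm_real, Real.norm_eq_abs, abs_of_nonneg (hTn y)]
      congr 2
      simp [Complex.mul_re]
    · simp [hK, if_neg h]
  -- measurability
  have hKm : Measurable (Function.uncurry K) := by
    have : Function.uncurry K = fun p : ℝ × ℝ =>
        Set.indicator {q : ℝ × ℝ | q.1 < q.2}
          (fun q => Complex.exp (-ξ * q.1) * (T q.2 : ℂ)) p := by
      funext p
      by_cases h : p.1 < p.2 <;>
        simp [Function.uncurry, hK, Set.indicator_apply, h]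
    rw [this]
    apply Measurable.indicator _ (measurableSet_lt measurable_fst measurable_snd)
    apply Measurable.mul
    · exact (Complex.continuous_exp.comp
        (continuous_const.mul (Complex.continuous_ofReal.comp continuous_fst))).measurable
    · exact Complex.measurable_ofReal.comp (hTm.comp measurable_snd)
  -- integrability on the product
  have hKint : Integrable (Function.uncurry K) (μ.prod μ) := by
    refine ⟨hKm.aestronglyMeasurable, ?_⟩
    rw [hasFiniteIntegral_iff_norm]
    have hswapl : (∫⁻ p, ENNReal.ofReal ‖Function.uncurry K p‖ ∂(μ.prod μ)) =
        ∫⁻ y, (∫⁻ x, ENNReal.ofReal ‖K x y‖ ∂μ) ∂μ := by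
      exact lintegral_prod_symm _ ((hKm.norm.ennreal_ofReal).aemeasurable)
    rw [hswapl]
    have hbound : ∀ y ∈ Ioi (0:ℝ), (∫⁻ x, ENNReal.ofReal ‖K x y‖ ∂μ) ≤
        ENNReal.ofReal ((1 + (ξ.re)⁻¹) * (T y * min y 1)) := by
      intro y hy
      have hy0 : (0:ℝ) < y := hy
      rcases le_or_gt y 1 with hy1 | hy1
      · -- small y : use indicator bound
        calc (∫⁻ x, ENNReal.ofReal ‖K x y‖ ∂μ)
            ≤ ∫⁻ x in Ioi (0:ℝ), (Ioo (0:ℝ) y).indicator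
                (fun _ => ENNReal.ofReal (T y)) x := by
              apply setLIntegral_mono (measurable_const.indicator measurableSet_Ioo)
              intro x hx
              rw [hKnorm]
              by_cases hxy : x < y
              · have hx0 : (0:ℝ) < x := hx
                rw [if_pos hxy, Set.indicator_of_mem (show x ∈ Ioo (0:ℝ) y from ⟨hx0, hxy⟩)]
                apply ENNReal.ofReal_le_ofReal
                have he : Real.exp (-ξ.re * x) ≤ 1 :=
                  Real.exp_le_one_iff.mpr (by nlinarith : -ξ.re * x ≤ 0)
                nlinarith [hTn y, Real.exp_pos (-ξ.re * x)]
              · rw [if_neg hxy]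
                simp
          _ = ENNReal.ofReal (T y) * volume (Ioo (0:ℝ) y) := by
              rw [lintegral_indicator measurableSet_Ioo, Measure.restrict_restrict
                measurableSet_Ioo, inter_eq_left.mpr Ioo_subset_Ioi_self,
                setLIntegral_const]
          _ ≤ ENNReal.ofReal ((1 + (ξ.re)⁻¹) * (T y * min y 1)) := by
              rw [Real.volume_Ioo, ← ENNReal.ofReal_mul (hTn y)]
              apply ENNReal.ofReal_le_ofReal
              rw [min_eq_left hy1]
              have hti : (0:ℝ) ≤ (ξ.re)⁻¹ := by positivity
              nlinarith [mul_nonneg (hTn y) hy0.le]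
      · -- large y : use exponential bound
        have hint : IntegrableOn (fun x => T y * Real.exp (-ξ.re * x)) (Ioi (0:ℝ)) :=
          (exp_neg_integrableOn_Ioi 0 hξ).const_mul (T y)
        calc (∫⁻ x, ENNReal.ofReal ‖K x y‖ ∂μ)
            ≤ ∫⁻ x in Ioi (0:ℝ), ENNReal.ofReal (T y * Real.exp (-ξ.re * x)) := by
              apply lintegral_mono
              intro x
              show ENNReal.ofReal ‖K x y‖ ≤ ENNReal.ofReal (T y * Real.exp (-ξ.re * x))
              rw [hKnorm]
              apply ENNReal.ofReal_le_ofReal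
              by_cases hxy : x < y
              · rw [if_pos hxy]; nlinarith [Real.exp_pos (-ξ.re * x), hTn y]
              · rw [if_neg hxy]
                exact mul_nonneg (hTn y) (Real.exp_pos _).le
          _ = ENNReal.ofReal (∫ x in Ioi (0:ℝ), T y * Real.exp (-ξ.re * x)) := by
              rw [ofReal_integral_eq_lintegral_ofReal hint]
              exact Eventually.of_forall fun x => mul_nonneg (hTn y) (Real.exp_pos _).le
          _ ≤ ENNReal.ofReal ((1 + (ξ.re)⁻¹) * (T y * min y 1)) := by
              apply ENNReal.ofReal_le_ofReal
              rw [integral_const_mul, integral_exp_real hξ]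
              rw [min_eq_right hy1.le]
              have hti : (0:ℝ) ≤ (ξ.re)⁻¹ := by positivity
              have h1t : 1/ξ.re = (ξ.re)⁻¹ := one_div _
              nlinarith [hTn y]
    calc (∫⁻ y, (∫⁻ x, ENNReal.ofReal ‖K x y‖ ∂μ) ∂μ)
        ≤ ∫⁻ y in Ioi (0:ℝ), ENNReal.ofReal ((1 + (ξ.re)⁻¹) * (T y * min y 1)) :=
          setLIntegral_mono ((((hTm.mul (measurable_id.min measurable_const)).const_mul
            _)).ennreal_ofReal) hbound
      _ < ⊤ := (hmaster.const_mul (1 + (ξ.re)⁻¹)).lintegral_lt_top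
  -- Fubini
  have hswap := integral_integral_swap (f := K) hKint
  -- identify LHS
  have hL : ∀ x ∈ Ioi (0:ℝ), (∫ y, K x y ∂μ) = Complex.exp (-ξ * x) * (PhiFn φ x : ℂ) := by
    intro x hx
    have hfun : (fun y => K x y) =
        fun y => (Ioi x).indicator (fun y => Complex.exp (-ξ * x) * (T y : ℂ)) y := by
      funext y
      by_cases h : x < y <;> simp [hK, Set.indicator_apply, mem_Ioi, h]
    rw [hfun, hμ, integral_indicator measurableSet_Ioi,
      Measure.restrict_restrict measurableSet_Ioi,
      inter_eq_left.mpr (Ioi_subset_Ioi (le_of_lt hx)),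
      integral_const_mul]
    rw [PhiFn, if_pos (mem_Ioi.mp hx)]
    congr 1
    exact integral_ofReal
  -- identify RHS
  have hR : ∀ y ∈ Ioi (0:ℝ), (∫ x, K x y ∂μ) =
      (T y : ℂ) * (1 - Complex.exp (-ξ * y)) / ξ := by
    intro y hy
    have hy0 : (0:ℝ) < y := hy
    have hfun : (fun x => K x y) =
        fun x => (Iio y).indicator (fun x => Complex.exp (-ξ * x) * (T y : ℂ)) x := by
      funext x
      by_cases h : x < y <;> simp [hK, Set.indicator_apply, mem_Iio, h]
    rw [hfun, hμ, integral_indicator measurableSet_Iio,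
      Measure.restrict_restrict measurableSet_Iio, Iio_inter_Ioi,
      integral_mul_const, ← integral_Ioc_eq_integral_Ioo,
      ← intervalIntegral.integral_of_le hy0.le, integral_exp_aux hξ0]
    ring
  calc (∫ x in Ioi (0:ℝ), Complex.exp (-ξ * x) * (PhiFn φ x : ℂ))
      = ∫ x, (∫ y, K x y ∂μ) ∂μ := by
        rw [hμ]
        exact (setIntegral_congr_fun measurableSet_Ioi (fun x hx => hL x hx)).symm
    _ = ∫ y, (∫ x, K x y ∂μ) ∂μ := hswap
    _ = ∫ y in Ioi (0:ℝ), (T y : ℂ) * (1 - Complex.exp (-ξ * y)) / ξ := by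
        rw [hμ]
        exact setIntegral_congr_fun measurableSet_Ioi (fun y hy => hR y hy)
    _ = (∫ y in Ioi (0:ℝ), (T y : ℂ) * (1 - Complex.exp (-ξ * y))) / ξ :=
        integral_div ξ _

lemma aux_sq1 {r t s : ℝ} (h : r^2 = t^2 + s^2) (h1 : 0 ≤ t) (h2 : t ≤ r/2) :
    (r/2)^2 ≤ s^2 := by nlinarith

lemma aux_sq2 {r x : ℝ} (h : (r/2)^2 ≤ x^2) (hx : 0 ≤ x) : r/2 ≤ x := by nlinarith

lemma re_eq (φ : Measure ℝ) (ξ : ℂ) (y : ℝ) :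
    ((levyTail φ y : ℂ) * (1 - Complex.exp (-ξ * y))).re =
      levyTail φ y * (1 - Real.exp (-(ξ.re * y)) * Real.cos (ξ.im * y)) := by
  have h1 : (-ξ * (y:ℂ)).re = -(ξ.re * y) := by
    simp [Complex.mul_re]
  have h2 : (-ξ * (y:ℂ)).im = -(ξ.im * y) := by
    simp [Complex.mul_im]
  rw [Complex.mul_re, Complex.ofReal_re, Complex.ofReal_im, Complex.sub_re, Complex.sub_im,
    Complex.one_re, Complex.one_im, Complex.exp_re, h1, h2, Real.cos_neg]
  ring

lemma integrand_nonneg (φ : Measure ℝ) {t : ℝ} (ht : 0 < t) (s : ℝ) {y : ℝ} (hy : 0 ≤ y) :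
    0 ≤ levyTail φ y * (1 - Real.exp (-(t * y)) * Real.cos (s * y)) := by
  apply mul_nonneg (tail_nonneg φ y)
  have h1 : Real.exp (-(t * y)) ≤ 1 := Real.exp_le_one_iff.mpr (by nlinarith)
  have h2 : Real.exp (-(t * y)) * Real.cos (s * y) ≤ Real.exp (-(t * y)) * 1 :=
    mul_le_mul_of_nonneg_left (Real.cos_le_one _) (Real.exp_pos _).le
  linarith

lemma branch_est (φ : Measure ℝ) {α C δ : ℝ} {t s : ℝ} (ht : 0 < t)
    (hfin : ∀ x : ℝ, 0 < x → φ (Ioi x) ≠ ⊤)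
    (hlow : ∀ x : ℝ, 0 < x → x ≤ δ → C/2 * x ^ (-α) ≤ levyTail φ x)
    {a b c₀ : ℝ} (ha : 0 < a) (hab : a < b) (hbδ : b ≤ δ) (hc₀ : 0 ≤ c₀)
    (hptw : ∀ y ∈ Icc a b, c₀ ≤ 1 - Real.exp (-(t * y)) * Real.cos (s * y))
    (hint : IntegrableOn
      (fun y => levyTail φ y * (1 - Real.exp (-(t * y)) * Real.cos (s * y))) (Ioi (0:ℝ))) :
    c₀ * (C/2 * b ^ (-α)) * (b - a) ≤
      ∫ y in Ioi (0:ℝ), levyTail φ y * (1 - Real.exp (-(t * y)) * Real.cos (s * y)) := by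
  have hb0 : (0:ℝ) < b := ha.trans hab
  have hsub : Icc a b ⊆ Ioi (0:ℝ) := fun y hy => lt_of_lt_of_le ha hy.1
  have h1 : (∫ y in Icc a b, levyTail φ y * (1 - Real.exp (-(t * y)) * Real.cos (s * y))) ≤
      ∫ y in Ioi (0:ℝ), levyTail φ y * (1 - Real.exp (-(t * y)) * Real.cos (s * y)) := by
    apply setIntegral_mono_set hint
    · filter_upwards [ae_restrict_mem measurableSet_Ioi] with y hy
      exact integrand_nonneg φ ht s (le_of_lt hy)
    · exact HasSubset.Subset.eventuallyLE hsub
  refine le_trans ?_ h1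
  have h2 := setIntegral_ge_of_const_le_real (μ := volume) (c := c₀ * (C/2 * b ^ (-α)))
    (f := fun y => levyTail φ y * (1 - Real.exp (-(t * y)) * Real.cos (s * y)))
    measurableSet_Icc (by simp [Real.volume_Icc]) ?_
    (hint.mono_set hsub)
  · calc c₀ * (C/2 * b ^ (-α)) * (b - a)
        = c₀ * (C/2 * b ^ (-α)) * (volume (Icc a b)).toReal := by
          rw [Real.volume_Icc, ENNReal.toReal_ofReal (by linarith)]
      _ ≤ _ := h2
  · intro y hy
    have hy0 : 0 < y := lt_of_lt_of_le ha hy.1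
    have hTy : C/2 * b ^ (-α) ≤ levyTail φ y :=
      le_trans (hlow b hb0 hbδ) (tail_anti φ hfin hy0 hy.2)
    calc c₀ * (C/2 * b ^ (-α)) = (C/2 * b ^ (-α)) * c₀ := by ring
      _ ≤ levyTail φ y * (1 - Real.exp (-(t * y)) * Real.cos (s * y)) :=
          mul_le_mul hTy (hptw y hy) hc₀ (tail_nonneg φ y)

end AbelianAux

/-- Abelian lower bound `|ψ(ξ)| ≥ b |ξ|^α` for large `|ξ|` in the right
half-plane, under the stable-like tail assumption. -/
theorem abelian_lower_bound (φ : Measure ℝ) (hH0 : H0 φ) (α C : ℝ)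
    (hα1 : 1 < α) (hα2 : α < 2) (hC : 0 < C)
    (htail : Tendsto (fun x : ℝ => levyTail φ x / x ^ (-α))
      (nhdsWithin 0 (Ioi 0)) (nhds C)) :
    ∃ b : ℝ, 0 < b ∧ ∃ R : ℝ, 0 < R ∧
      ∀ ξ : ℂ, 0 < ξ.re → R ≤ ‖ξ‖ →
        b * ‖ξ‖ ^ α ≤ ‖psiFn φ ξ‖ := by
  classical
  obtain ⟨h01, h02, h03⟩ := hH0
  obtain ⟨δ, hδ0, hδ1, hδ⟩ := AbelianAux.tail_exists_delta φ α C hC htail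
  have hlow : ∀ x : ℝ, 0 < x → x ≤ δ → C/2 * x ^ (-α) ≤ levyTail φ x :=
    fun x hx hxδ => (hδ x hx hxδ).1
  have hfin : ∀ x : ℝ, 0 < x → φ (Ioi x) ≠ ⊤ :=
    AbelianAux.tail_ne_top φ hδ0 ((hδ δ hδ0 le_rfl).2.2)
      (fun x hx hxδ => (hδ x hx hxδ).2.2)
  have hsf : SigmaFinite φ := AbelianAux.sigmaFinite_aux φ h01 hfin
  have hIoi1 := AbelianAux.integrableOn_tail_Ioi_one φ h01 h02 hsf
  have hmaster := AbelianAux.integrable_master φ hα1 hα2 hδ0 hδ1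
    (fun x hx hxδ => (hδ x hx hxδ).2.1) hfin hIoi1
  have hαpos : (0:ℝ) < α := by linarith
  have hexp1 : Real.exp (-1) < 1 := Real.exp_lt_one_iff.mpr (by norm_num)
  have hπ := Real.pi_pos
  set b1 : ℝ := (1 - Real.exp (-1)) * (C/2) * (4:ℝ) ^ (-α) with hb1def
  set b2 : ℝ := (C/2) * (2*Real.pi) ^ (-α) * (Real.pi/2) with hb2def
  have hb1 : 0 < b1 := by
    have h4 : (0:ℝ) < (4:ℝ) ^ (-α) := Real.rpow_pos_of_pos (by norm_num) _
    have he : (0:ℝ) < 1 - Real.exp (-1) := by linarith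
    positivity
  have hb2 : 0 < b2 := by
    have h4 : (0:ℝ) < (2*Real.pi) ^ (-α) := Real.rpow_pos_of_pos (by positivity) _
    positivity
  refine ⟨min b1 b2, lt_min hb1 hb2, max (4/δ) (2*Real.pi/δ), lt_max_of_lt_left
    (by positivity), fun ξ hre hRξ => ?_⟩
  have hξ0 : ξ ≠ 0 := fun h => by simp [h] at hre
  set t : ℝ := ξ.re with htdef
  set s : ℝ := ξ.im with hsdef
  set r : ℝ := ‖ξ‖ with hrdef
  have hr0 : 0 < r := by
    calc (0:ℝ) < 4/δ := by positivity
      _ ≤ max (4/δ) (2*Real.pi/δ) := le_max_left _ _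
      _ ≤ r := hRξ
  have htr : t ≤ r := le_trans (le_abs_self t) (Complex.abs_re_le_norm ξ)
  -- the identity psi = ξ * M
  set M : ℂ := ∫ y in Ioi (0:ℝ), (levyTail φ y : ℂ) * (1 - Complex.exp (-ξ * y)) with hMdef
  have hψ : psiFn φ ξ = ξ * M := by
    rw [psiFn, AbelianAux.psi_eq φ hre hfin hmaster, ← hMdef]
    rw [div_eq_mul_inv, pow_two, mul_comm ξ ξ, mul_assoc, mul_comm M ξ⁻¹,
      ← mul_assoc ξ ξ⁻¹ M, mul_inv_cancel₀ hξ0, one_mul]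
  have hM_int := AbelianAux.integrable_M φ hre hmaster
  -- the real part of M
  have hMre : M.re = ∫ y in Ioi (0:ℝ),
      levyTail φ y * (1 - Real.exp (-(t * y)) * Real.cos (s * y)) := by
    have h := integral_re hM_int
    simp only [RCLike.re_to_complex] at h
    rw [hMdef, ← h]
    exact setIntegral_congr_fun measurableSet_Ioi fun y _ => AbelianAux.re_eq φ ξ y
  have hint_re : IntegrableOn
      (fun y => levyTail φ y * (1 - Real.exp (-(t * y)) * Real.cos (s * y))) (Ioi (0:ℝ)) := by
    have h := hM_int.re
    simp only [RCLike.re_to_complex] at h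
    apply h.congr
    exact Eventually.of_forall fun y => AbelianAux.re_eq φ ξ y
  -- it suffices to bound r * M.re from below
  have habs : ‖psiFn φ ξ‖ = r * ‖M‖ := by rw [hψ, norm_mul]
  suffices hsuff : min b1 b2 * r ^ α ≤ r * M.re by
    calc min b1 b2 * r ^ α ≤ r * M.re := hsuff
      _ ≤ r * ‖M‖ := mul_le_mul_of_nonneg_left (Complex.re_le_norm M) hr0.le
      _ = ‖psiFn φ ξ‖ := habs.symm
  rcases le_or_gt (r/2) t with hbr | hbr
  · -- branch 1 : t ≥ r/2
    have ht2δ : 2/t ≤ δ := by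
      have h1 : 4/δ ≤ r := le_trans (le_max_left _ _) hRξ
      have h2 : 2/δ ≤ t := by
        calc 2/δ = (4/δ)/2 := by ring
          _ ≤ r/2 := by linarith
          _ ≤ t := hbr
      rw [div_le_iff₀ hre]
      rw [div_le_iff₀ hδ0] at h2
      linarith
    have hptw : ∀ y ∈ Icc (1/t) (2/t),
        1 - Real.exp (-1) ≤ 1 - Real.exp (-(t * y)) * Real.cos (s * y) := by
      intro y hy
      have h1 : 1 ≤ t * y := by
        have h := hy.1
        rw [div_le_iff₀ hre] at h
        linarith [mul_comm t y]
      have h2 : Real.exp (-(t*y)) ≤ Real.exp (-1) := Real.exp_le_exp.mpr (by linarith)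
      have h3 : Real.exp (-(t*y)) * Real.cos (s*y) ≤ Real.exp (-(t*y)) * 1 :=
        mul_le_mul_of_nonneg_left (Real.cos_le_one _) (Real.exp_pos _).le
      rw [mul_one] at h3
      linarith
    have hest := AbelianAux.branch_est φ (δ := δ) (C := C) (α := α) (s := s) hre hfin hlow
      (a := 1/t) (b := 2/t) (c₀ := 1 - Real.exp (-1))
      (by positivity) (by rw [div_lt_div_iff₀ hre hre]; linarith)
      ht2δ (by linarith) hptw hint_re
    rw [← hMre] at hest
    -- numeric chain
    have h2t : ((2/t : ℝ)) ^ (-α) = (t/2) ^ α := by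
      rw [Real.rpow_neg (by positivity), ← Real.inv_rpow (by positivity), inv_div]
    have hpow : ((r/4 : ℝ)) ^ α ≤ (t/2) ^ α :=
      Real.rpow_le_rpow (by positivity) (by linarith) hαpos.le
    have hr4 : ((r/4 : ℝ)) ^ α = r ^ α * (4:ℝ) ^ (-α) := by
      rw [Real.div_rpow hr0.le (by norm_num : (0:ℝ) ≤ 4), Real.rpow_neg (by norm_num),
        div_eq_mul_inv]
    have hrt1 : 1 ≤ r * (1/t) := by
      rw [mul_one_div, le_div_iff₀ hre]
      linarith
    have hposA : (0:ℝ) ≤ (1 - Real.exp (-1)) * (C/2) :=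
      mul_nonneg (by linarith) (by linarith)
    have hposB : (0:ℝ) ≤ (1 - Real.exp (-1)) * (C/2 * (t/2) ^ α) :=
      mul_nonneg (by linarith) (mul_nonneg (by linarith)
        (Real.rpow_pos_of_pos (by positivity) α).le)
    calc min b1 b2 * r ^ α
        ≤ b1 * r ^ α :=
          mul_le_mul_of_nonneg_right (min_le_left _ _) (Real.rpow_nonneg hr0.le α)
      _ = (1 - Real.exp (-1)) * (C/2) * ((r/4) ^ α) := by rw [hb1def, hr4]; ring
      _ ≤ (1 - Real.exp (-1)) * (C/2) * ((t/2) ^ α) :=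
          mul_le_mul_of_nonneg_left hpow hposA
      _ = 1 * ((1 - Real.exp (-1)) * (C/2 * (t/2) ^ α)) := by ring
      _ ≤ (r * (1/t)) * ((1 - Real.exp (-1)) * (C/2 * (t/2) ^ α)) :=
          mul_le_mul_of_nonneg_right hrt1 hposB
      _ = r * ((1 - Real.exp (-1)) * (C/2 * (2/t) ^ (-α)) * (2/t - 1/t)) := by
          rw [h2t]; ring
      _ ≤ r * M.re := mul_le_mul_of_nonneg_left hest hr0.le
  · -- branch 2 : |s| ≥ r/2
    set σ : ℝ := |s| with hσdef
    have hsq : r ^ 2 = t ^ 2 + s ^ 2 := by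
      rw [hrdef, Complex.sq_norm, Complex.normSq_apply]; ring
    have hσr : r/2 ≤ σ := AbelianAux.aux_sq2
      (by rw [hσdef, sq_abs]; exact AbelianAux.aux_sq1 hsq hre.le hbr.le) (abs_nonneg s)
    have hσ0 : (0:ℝ) < σ := lt_of_lt_of_le (by positivity) hσr
    have hσr' : σ ≤ r := Complex.abs_im_le_norm ξ
    have hbδ : Real.pi/σ ≤ δ := by
      have h1 : 2*Real.pi/δ ≤ r := le_trans (le_max_right _ _) hRξ
      have h2 : Real.pi/δ ≤ σ := by
        calc Real.pi/δ = (2*Real.pi/δ)/2 := by ring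
          _ ≤ r/2 := by linarith
          _ ≤ σ := hσr
      rw [div_le_iff₀ hσ0]
      rw [div_le_iff₀ hδ0] at h2
      linarith
    have hptw : ∀ y ∈ Icc (Real.pi/(2*σ)) (Real.pi/σ),
        (1:ℝ) ≤ 1 - Real.exp (-(t * y)) * Real.cos (s * y) := by
      intro y hy
      have hy0 : 0 < y := lt_of_lt_of_le (by positivity) hy.1
      have hcos : Real.cos (s * y) ≤ 0 := by
        have hc1 : Real.cos (s * y) = Real.cos (σ * y) := by
          rw [← Real.cos_abs (s*y), abs_mul, abs_of_nonneg hy0.le]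
        rw [hc1]
        apply Real.cos_nonpos_of_pi_div_two_le_of_le
        · have h := hy.1
          rw [div_le_iff₀ (by positivity : (0:ℝ) < 2*σ)] at h
          ring_nf at h ⊢
          linarith
        · have h := hy.2
          rw [le_div_iff₀ hσ0] at h
          ring_nf at h ⊢
          linarith
      have h5 : Real.exp (-(t*y)) * Real.cos (s*y) ≤ 0 :=
        mul_nonpos_iff.mpr (Or.inl ⟨(Real.exp_pos _).le, hcos⟩)
      linarith
    have hest := AbelianAux.branch_est φ (δ := δ) (C := C) (α := α) (s := s) hre hfin hlow
      (a := Real.pi/(2*σ)) (b := Real.pi/σ) (c₀ := (1:ℝ))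
      (by positivity) (by rw [div_lt_div_iff₀ (by positivity) hσ0]; nlinarith)
      hbδ zero_le_one hptw hint_re
    rw [← hMre] at hest
    -- numeric chain
    have hπσ : ((Real.pi/σ : ℝ)) ^ (-α) = (σ/Real.pi) ^ α := by
      rw [Real.rpow_neg (by positivity), ← Real.inv_rpow (by positivity), inv_div]
    have hpow : ((r/(2*Real.pi) : ℝ)) ^ α ≤ (σ/Real.pi) ^ α := by
      apply Real.rpow_le_rpow (by positivity) _ hαpos.le
      rw [show r/(2*Real.pi) = (r/2)/Real.pi by ring]
      exact (div_le_div_iff_of_pos_right hπ).mpr hσr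
    have hr2π : ((r/(2*Real.pi) : ℝ)) ^ α = r ^ α * (2*Real.pi) ^ (-α) := by
      rw [Real.div_rpow hr0.le (by positivity : (0:ℝ) ≤ 2*Real.pi),
        Real.rpow_neg (by positivity), div_eq_mul_inv]
    have hmono2 : Real.pi/(2*r) ≤ Real.pi/(2*σ) := by
      apply div_le_div_of_nonneg_left hπ.le (by positivity) (by linarith)
    have hposC : (0:ℝ) ≤ C/2 * (σ/Real.pi) ^ α :=
      mul_nonneg (by linarith) (Real.rpow_pos_of_pos (by positivity) α).le
    have hposD : (0:ℝ) ≤ C/2 * ((r/(2*Real.pi)) ^ α) :=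
      mul_nonneg (by linarith) (Real.rpow_pos_of_pos (by positivity) α).le
    calc min b1 b2 * r ^ α
        ≤ b2 * r ^ α :=
          mul_le_mul_of_nonneg_right (min_le_right _ _) (Real.rpow_nonneg hr0.le α)
      _ = C/2 * ((r/(2*Real.pi)) ^ α) * (Real.pi/2) := by rw [hb2def, hr2π]; ring
      _ = r * (C/2 * ((r/(2*Real.pi)) ^ α) * (Real.pi/(2*r))) := by
          field_simp
      _ ≤ r * (C/2 * ((σ/Real.pi) ^ α) * (Real.pi/(2*σ))) := by
          apply mul_le_mul_of_nonneg_left _ hr0.le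
          apply mul_le_mul
          · exact mul_le_mul_of_nonneg_left hpow (by linarith)
          · exact hmono2
          · positivity
          · exact hposC
      _ = r * (1 * (C/2 * (Real.pi/σ) ^ (-α)) * (Real.pi/σ - Real.pi/(2*σ))) := by
          rw [hπσ]; ring
      _ ≤ r * M.re := mul_le_mul_of_nonneg_left hest hr0.le
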